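/- Let X = (⋃ₙ Aₙ) ∪ B be the atomic/non-atomic decomposition of a σ-finite measure space, and let Φ₁, Φ₂ be Young functions with Φ₁, Φ₂ ∈ Δ' and such that Φ₂∘Φ₁⁻¹ is a Young function. If u ∈ L⁰(Σ) satisfies (i) u = 0 μ-a.e. on B and (ii) sup_n Φ₂(u(Aₙ)/Φ₁⁻¹(μ(Aₙ)))·μ(Aₙ) < ∞, then M_u is a bounded multiplication operator from L^{Φ₁}(Σ) into L^{Φ₂}(Σ). -/

import Mathlib

open MeasureTheory Filter Topology

/-- A Young function: continuous, convex, even, vanishing exactly at 0,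
with superlinear growth at infinity. -/
structure YoungFunction where
  toFun : ℝ → ℝ
  continuous' : Continuous toFun
  convexOn' : ConvexOn ℝ Set.univ toFun
  even' : ∀ x, toFun (-x) = toFun x
  zero_iff' : ∀ x, toFun x = 0 ↔ x = 0
  tendsto_atTop' : Tendsto (fun x => toFun x / x) atTop atTop

instance : CoeFun YoungFunction fun _ => ℝ → ℝ := ⟨YoungFunction.toFun⟩

variable {X : Type*} [MeasurableSpace X]

/-- Membership in the Orlicz space `L^Φ(μ)`. -/
def MemOrlicz (Φ : YoungFunction) (μ : Measure X) (f : X → ℝ) : Prop :=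
  AEStronglyMeasurable f μ ∧ ∃ k > 0, Integrable (fun x => Φ (k * f x)) μ

/-- The Luxemburg norm on the Orlicz space `L^Φ(μ)`. -/
noncomputable def luxNorm (Φ : YoungFunction) (μ : Measure X) (f : X → ℝ) : ℝ :=
  sInf {k : ℝ | 0 < k ∧ ∫ x, Φ (f x / k) ∂μ ≤ 1}

/-- The generalized (right) inverse of a Young function on `[0,∞)`. -/
noncomputable def yInv (Φ : YoungFunction) (y : ℝ) : ℝ :=
  sSup {x : ℝ | 0 ≤ x ∧ Φ x ≤ y}

/-- `Φ` satisfies the `Δ₂` condition globally. -/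
def YoungDeltaTwo (Φ : YoungFunction) : Prop :=
  ∃ k > 0, ∀ x : ℝ, 0 ≤ x → Φ (2 * x) ≤ k * Φ x

/-- `Φ` satisfies the `Δ'` condition globally, with constant `c`. -/
def YoungDeltaPrime (Φ : YoungFunction) (c : ℝ) : Prop :=
  0 < c ∧ ∀ x y : ℝ, 0 ≤ x → 0 ≤ y → Φ (x * y) ≤ c * Φ x * Φ y

/-- `Φ` satisfies the `∇'` condition globally, with constant `b`. -/
def YoungNablaPrime (Φ : YoungFunction) (b : ℝ) : Prop :=
  0 < b ∧ ∀ x y : ℝ, 0 ≤ x → 0 ≤ y → Φ x * Φ y ≤ Φ (b * x * y)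

/-- `Φ ≺ Ψ` : `Φ` is weaker than `Ψ`. -/
def YoungWeaker (Φ Ψ : YoungFunction) : Prop :=
  ∃ a > 0, ∃ x₀ : ℝ, 0 ≤ x₀ ∧ ∀ x : ℝ, x₀ ≤ x → Φ x ≤ Ψ (a * x)

/-- `A` is an atom of the measure `μ`. -/
def IsAtomSet (μ : Measure X) (A : Set X) : Prop :=
  MeasurableSet A ∧ 0 < μ A ∧
    ∀ B : Set X, MeasurableSet B → B ⊆ A → μ B = 0 ∨ μ B = μ A

/-- `μ` is non-atomic on the set `S`. -/
def NonAtomicOn (μ : Measure X) (S : Set X) : Prop :=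
  ∀ A : Set X, A ⊆ S → ¬ IsAtomSet μ A

/-- A linear map between Orlicz spaces (given as a map on functions) is bounded. -/
def OrliczBounded (Φ₁ Φ₂ : YoungFunction) (μ : Measure X)
    (Tmap : (X → ℝ) → (X → ℝ)) : Prop :=
  ∃ C > 0, ∀ f : X → ℝ, MemOrlicz Φ₁ μ f →
    MemOrlicz Φ₂ μ (Tmap f) ∧ luxNorm Φ₂ μ (Tmap f) ≤ C * luxNorm Φ₁ μ f

/-- The atomic decomposition of a σ-finite measure space: `X = (⋃ n, A n) ∪ B`
with the `A n` pairwise disjoint atoms of finite measure and `B` non-atomic. -/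
def AtomicDecomposition (μ : Measure X) (A : ℕ → Set X) (B : Set X) : Prop :=
  (∀ n, IsAtomSet μ (A n)) ∧ (∀ n, μ (A n) < ⊤) ∧
    Pairwise (Function.onFun Disjoint A) ∧ (∀ n, Disjoint (A n) B) ∧
    MeasurableSet B ∧ NonAtomicOn μ B ∧ (⋃ n, A n) ∪ B = Set.univ

namespace YoungFunction

variable (Φ : YoungFunction)

lemma zero : Φ 0 = 0 := (Φ.zero_iff' 0).mpr rfl

lemma nonneg (x : ℝ) : 0 ≤ Φ x := by
  have h := Φ.convexOn'.2 (Set.mem_univ x) (Set.mem_univ (-x))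
    (by norm_num : (0:ℝ) ≤ 1/2) (by norm_num : (0:ℝ) ≤ 1/2) (by norm_num)
  simp only [smul_eq_mul] at h
  have hx : (1/2:ℝ) * x + 1/2 * (-x) = 0 := by ring
  rw [hx, Φ.zero, Φ.even'] at h
  linarith

lemma abs_eq (x : ℝ) : Φ |x| = Φ x := by
  rcases abs_choice x with h | h
  · rw [h]
  · rw [h, Φ.even']

lemma scale {l x : ℝ} (h0 : 0 ≤ l) (h1 : l ≤ 1) : Φ (l * x) ≤ l * Φ x := by
  have h := Φ.convexOn'.2 (Set.mem_univ x) (Set.mem_univ (0:ℝ))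
    (show (0:ℝ) ≤ l from h0) (show (0:ℝ) ≤ 1 - l by linarith)
    (show l + (1 - l) = 1 by ring)
  simp only [smul_eq_mul, mul_zero, add_zero, Φ.zero] at h
  linarith

lemma mono {a b : ℝ} (ha : 0 ≤ a) (hab : a ≤ b) : Φ a ≤ Φ b := by
  rcases eq_or_lt_of_le (ha.trans hab) with h | hb
  · have : a = 0 := le_antisymm (h ▸ hab) ha
    rw [this, ← h]
  · have h1 : a = (a/b) * b := by field_simp
    calc Φ a = Φ ((a/b) * b) := by rw [← h1]
    _ ≤ (a/b) * Φ b := Φ.scale (div_nonneg ha hb.le) (div_le_one_of_le₀ hab hb.le)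
    _ ≤ 1 * Φ b := by
        apply mul_le_mul_of_nonneg_right _ (Φ.nonneg b)
        exact div_le_one_of_le₀ hab hb.le
    _ = Φ b := one_mul _

lemma pos {x : ℝ} (hx : x ≠ 0) : 0 < Φ x :=
  lt_of_le_of_ne (Φ.nonneg x) (fun h => hx ((Φ.zero_iff' x).mp h.symm))

/-- The set defining `yInv` is nonempty and bounded above for `y ≥ 0`. -/
lemma yInv_set_nonempty {y : ℝ} (hy : 0 ≤ y) :
    ({x : ℝ | 0 ≤ x ∧ Φ x ≤ y}).Nonempty :=
  ⟨0, le_refl 0, by rw [Φ.zero]; exact hy⟩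

lemma yInv_set_bddAbove (y : ℝ) : BddAbove {x : ℝ | 0 ≤ x ∧ Φ x ≤ y} := by
  have h := Φ.tendsto_atTop'
  rw [tendsto_atTop_atTop] at h
  obtain ⟨x₀, hx₀⟩ := h (y + 1)
  refine ⟨max x₀ 1, fun x hx => ?_⟩
  by_contra hgt
  push_neg at hgt
  have hx1 : (1:ℝ) ≤ x := le_of_lt (lt_of_le_of_lt (le_max_right x₀ 1) hgt)
  have h2 : y + 1 ≤ Φ x / x := hx₀ x (le_of_lt (lt_of_le_of_lt (le_max_left x₀ 1) hgt))
  have h3 : (y+1) * x ≤ Φ x := by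
    rw [div_eq_mul_inv] at h2
    have := mul_le_mul_of_nonneg_right h2 (by linarith : (0:ℝ) ≤ x)
    rwa [mul_assoc, inv_mul_cancel₀ (by linarith : x ≠ 0), mul_one] at this
  have h4 : y + 1 ≤ (y+1) * x := by nlinarith [hx.2, Φ.nonneg x]
  have := hx.2
  linarith

lemma yInv_mem {y : ℝ} (hy : 0 ≤ y) : yInv Φ y ∈ {x : ℝ | 0 ≤ x ∧ Φ x ≤ y} := by
  have hcl : IsClosed {x : ℝ | 0 ≤ x ∧ Φ x ≤ y} := by
    exact (isClosed_le continuous_const continuous_id).inter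
      (isClosed_le Φ.continuous' continuous_const)
  exact hcl.csSup_mem (Φ.yInv_set_nonempty hy) (Φ.yInv_set_bddAbove y)

lemma yInv_nonneg {y : ℝ} (hy : 0 ≤ y) : 0 ≤ yInv Φ y := (Φ.yInv_mem hy).1

lemma apply_yInv_le {y : ℝ} (hy : 0 ≤ y) : Φ (yInv Φ y) ≤ y := (Φ.yInv_mem hy).2

lemma le_yInv {x y : ℝ} (hx : 0 ≤ x) (h : Φ x ≤ y) : x ≤ yInv Φ y :=
  le_csSup (Φ.yInv_set_bddAbove y) ⟨hx, h⟩

lemma yInv_pos {y : ℝ} (hy : 0 < y) : 0 < yInv Φ y := by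
  have hc : Continuous Φ.toFun := Φ.continuous'
  have h0 : Φ 0 = 0 := Φ.zero
  have : ∀ᶠ x in 𝓝 (0:ℝ), Φ x < y := by
    have := hc.continuousAt (x := (0:ℝ))
    exact this.eventually_lt continuousAt_const (by rw [h0]; exact hy)
  obtain ⟨ε, hε, hball⟩ := Metric.eventually_nhds_iff.mp this
  have hd : dist (ε/2) 0 < ε := by
    rw [Real.dist_eq, sub_zero, abs_of_pos (by linarith : (0:ℝ) < ε/2)]; linarith
  have h2 : Φ (ε/2) < y := hball hd
  calc (0:ℝ) < ε/2 := by linarith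
  _ ≤ yInv Φ y := Φ.le_yInv (by linarith) h2.le

end YoungFunction
/-- A measurable real function is a.e. constant on an atom of finite measure. -/
lemma exists_ae_const_on_atom {X : Type*} [MeasurableSpace X] {μ : Measure X}
    {A : Set X} (hA : IsAtomSet μ A) (hfin : μ A < ⊤) {g : X → ℝ}
    (hg : Measurable g) : ∃ c : ℝ, ∀ᵐ x ∂μ.restrict A, g x = c := by
  obtain ⟨hmA, hpos, hdich⟩ := hA
  set m : ℝ → ENNReal := fun q => μ (A ∩ {x | g x ≤ q}) with hm
  have hmeas : ∀ q : ℝ, MeasurableSet (A ∩ {x | g x ≤ q}) :=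
    fun q => hmA.inter (hg measurableSet_Iic)
  have hmono : ∀ {q q' : ℝ}, q ≤ q' → m q ≤ m q' := by
    intro q q' h
    exact measure_mono (Set.inter_subset_inter_right _ (fun x hx => le_trans hx h))
  have hdi : ∀ q : ℝ, m q = 0 ∨ m q = μ A := by
    intro q
    exact hdich _ (hmeas q) Set.inter_subset_left
  set T : Set ℝ := {q | m q = μ A} with hT
  have hup : ∀ {q q' : ℝ}, q ∈ T → q ≤ q' → q' ∈ T := by
    intro q q' hq hle
    have h1 : μ A ≤ m q' := hq ▸ hmono hle
    exact le_antisymm (measure_mono Set.inter_subset_left) h1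
  -- T is nonempty
  have hTne : T.Nonempty := by
    by_contra hemp
    have hall : ∀ q : ℝ, m q = 0 := by
      intro q
      rcases hdi q with h | h
      · exact h
      · exact absurd ⟨q, h⟩ hemp
    have hcover : A = ⋃ n : ℕ, A ∩ {x | g x ≤ (n:ℝ)} := by
      ext x
      simp only [Set.mem_iUnion, Set.mem_inter_iff, Set.mem_setOf_eq]
      constructor
      · intro hx
        obtain ⟨n, hn⟩ := exists_nat_ge (g x)
        exact ⟨n, hx, hn⟩
      · rintro ⟨n, hx, -⟩; exact hx
    have hle : μ A ≤ ∑' n : ℕ, m n := hcover ▸ measure_iUnion_le _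
    rw [tsum_congr (fun n : ℕ => hall (n:ℝ)), tsum_zero] at hle
    exact hpos.ne' (le_antisymm hle (zero_le))
  -- T is bounded below
  have hlow : ∃ n : ℕ, m (-(n:ℝ)) = 0 := by
    by_contra hno
    push_neg at hno
    have hallA : ∀ n : ℕ, m (-(n:ℝ)) = μ A := by
      intro n; rcases hdi (-(n:ℝ)) with h | h
      · exact absurd h (hno n)
      · exact h
    have hanti : Antitone (fun n : ℕ => A ∩ {x | g x ≤ -(n:ℝ)}) := by
      intro a b hab
      apply Set.inter_subset_inter_right
      intro x hx
      have hx' : g x ≤ -(b:ℝ) := hx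
      have hab' : (a:ℝ) ≤ b := by exact_mod_cast hab
      show g x ≤ -(a:ℝ)
      linarith
    have hlim := MeasureTheory.tendsto_measure_iInter_atTop (μ := μ)
      (s := fun n : ℕ => A ∩ {x | g x ≤ -(n:ℝ)})
      (fun n : ℕ => (hmeas (-(n:ℝ))).nullMeasurableSet) hanti
      ⟨0, (lt_of_le_of_lt (measure_mono Set.inter_subset_left) hfin).ne⟩
    have hempty : (⋂ n : ℕ, A ∩ {x | g x ≤ -(n:ℝ)}) = ∅ := by
      apply Set.eq_empty_iff_forall_notMem.mpr
      intro x hx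
      obtain ⟨n, hn⟩ := exists_nat_gt (-(g x))
      have h2 : g x ≤ -(n:ℝ) := (Set.mem_iInter.mp hx n).2
      linarith
    simp only [hempty, measure_empty] at hlim
    have hconst : Tendsto (fun _ : ℕ => μ A) atTop (𝓝 (0:ENNReal)) := by
      convert hlim using 1
      funext n
      exact (hallA n).symm
    exact hpos.ne' (tendsto_nhds_unique tendsto_const_nhds hconst)
  obtain ⟨n₀, hn₀⟩ := hlow
  have hbdd : BddBelow T := by
    refine ⟨-(n₀:ℝ), fun q hq => ?_⟩
    by_contra hlt
    push_neg at hlt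
    have h1 : m q ≤ m (-(n₀:ℝ)) := hmono hlt.le
    rw [hn₀] at h1
    have h2 : m q = 0 := le_antisymm h1 (zero_le)
    have hq' : m q = μ A := hq
    exact hpos.ne' (hq'.symm.trans h2)
  set c := sInf T with hc
  -- c ∈ T
  have hcT : c ∈ T := by
    have hseq : ∀ n : ℕ, (c + 1/((n:ℝ)+1)) ∈ T := by
      intro n
      have hlt : c < c + 1/((n:ℝ)+1) := by
        have : (0:ℝ) < 1/((n:ℝ)+1) := by positivity
        linarith
      obtain ⟨t, htT, htlt⟩ := exists_lt_of_csInf_lt hTne hlt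
      exact hup htT htlt.le
    have hanti : Antitone (fun n : ℕ => A ∩ {x | g x ≤ c + 1/((n:ℝ)+1)}) := by
      intro a b hab
      apply Set.inter_subset_inter_right
      intro x hx
      have hx' : g x ≤ c + 1/((b:ℝ)+1) := hx
      have hd : (1:ℝ)/((b:ℝ)+1) ≤ 1/((a:ℝ)+1) := by
        apply one_div_le_one_div_of_le (by positivity)
        have : (a:ℝ) ≤ b := by exact_mod_cast hab
        linarith
      show g x ≤ c + 1/((a:ℝ)+1)
      linarith
    have hlim := MeasureTheory.tendsto_measure_iInter_atTop (μ := μ)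
      (s := fun n : ℕ => A ∩ {x | g x ≤ c + 1/((n:ℝ)+1)})
      (fun n : ℕ => (hmeas _).nullMeasurableSet) hanti
      ⟨0, (lt_of_le_of_lt (measure_mono Set.inter_subset_left) hfin).ne⟩
    have hint : (⋂ n : ℕ, A ∩ {x | g x ≤ c + 1/((n:ℝ)+1)}) = A ∩ {x | g x ≤ c} := by
      ext x
      simp only [Set.mem_iInter, Set.mem_inter_iff, Set.mem_setOf_eq]
      constructor
      · intro h
        refine ⟨(h 0).1, ?_⟩
        by_contra hgt
        push_neg at hgt
        obtain ⟨n, hn⟩ := exists_nat_one_div_lt (by linarith : (0:ℝ) < g x - c)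
        have := (h n).2
        linarith
      · intro ⟨h1, h2⟩ n
        refine ⟨h1, le_trans h2 ?_⟩
        have : (0:ℝ) < 1/((n:ℝ)+1) := by positivity
        linarith
    rw [hint] at hlim
    have hconst : Tendsto (fun _ : ℕ => μ A) atTop (𝓝 (m c)) := by
      convert hlim using 1
      funext n
      exact (hseq n).symm
    show m c = μ A
    exact tendsto_nhds_unique hconst tendsto_const_nhds
  -- q < c implies m q = 0
  have hbelow : ∀ q : ℝ, q < c → m q = 0 := by
    intro q hq
    rcases hdi q with h | h
    · exact h
    · exact absurd (csInf_le hbdd (hT ▸ h)) (not_le.mpr hq)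
  -- the upper part is null
  have hupper : μ (A \ {x | g x ≤ c}) = 0 := by
    have hsum := measure_inter_add_diff (μ := μ) A
      (hg measurableSet_Iic : MeasurableSet {x | g x ≤ c})
    have : μ A + μ (A \ {x | g x ≤ c}) = μ A + 0 := by
      rw [add_zero]
      nth_rewrite 1 [← hcT]
      exact hsum
    exact (ENNReal.add_right_inj hfin.ne).mp this
  -- the lower part is null
  have hlower : μ (A ∩ {x | g x < c}) = 0 := by
    have hcov : A ∩ {x | g x < c} ⊆ ⋃ n : ℕ, A ∩ {x | g x ≤ c - 1/((n:ℝ)+1)} := by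
      rintro x ⟨hxA, hxg⟩
      have hxg' : g x < c := hxg
      simp only [Set.mem_iUnion, Set.mem_inter_iff, Set.mem_setOf_eq]
      obtain ⟨n, hn⟩ := exists_nat_one_div_lt (by linarith : (0:ℝ) < c - g x)
      exact ⟨n, hxA, by linarith⟩
    have hle2 : μ (A ∩ {x | g x < c}) ≤ ∑' n : ℕ, m (c - 1/((n:ℝ)+1)) :=
      le_trans (measure_mono hcov) (measure_iUnion_le _)
    have hz : ∀ n : ℕ, m (c - 1/((n:ℝ)+1)) = 0 := by
      intro n
      apply hbelow
      have : (0:ℝ) < 1/((n:ℝ)+1) := by positivity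
      linarith
    rw [tsum_congr hz, tsum_zero] at hle2
    exact le_antisymm hle2 (zero_le)
  refine ⟨c, ?_⟩
  rw [ae_iff, Measure.restrict_apply (by
    exact (hg (measurableSet_singleton c)).compl : MeasurableSet {x | ¬ g x = c})]
  have hsub : {x | ¬ g x = c} ∩ A ⊆ (A ∩ {x | g x < c}) ∪ (A \ {x | g x ≤ c}) := by
    rintro x ⟨hne, hxA⟩
    rcases lt_trichotomy (g x) c with h | h | h
    · exact Or.inl ⟨hxA, h⟩
    · exact absurd h hne
    · exact Or.inr ⟨hxA, by simpa using not_le.mpr h⟩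
  exact le_antisymm (le_trans (measure_mono hsub)
    (le_trans (measure_union_le _ _) (by rw [hlower, hupper, add_zero]))) (zero_le)
/-- sufficient conditions for boundedness of `M_u` when `Φ₁, Φ₂ ∈ Δ'`
and `Φ₂ ∘ Φ₁⁻¹` is a Young function. -/
theorem multiplication_bounded_sufficient
    {X : Type*} [MeasurableSpace X] (μ : Measure X) [SigmaFinite μ]
    (A : ℕ → Set X) (B : Set X) (hdec : AtomicDecomposition μ A B)
    (Φ₁ Φ₂ : YoungFunction) (c₁ c₂ : ℝ)
    (hΔ₁ : YoungDeltaPrime Φ₁ c₁) (hΔ₂ : YoungDeltaPrime Φ₂ c₂)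
    (hcomp : ∃ Ψ : YoungFunction, ∀ x : ℝ, 0 ≤ x → Ψ x = Φ₂ (yInv Φ₁ x))
    (u : X → ℝ) (hu : Measurable u)
    (cu : ℕ → ℝ) (hcu : ∀ n, ∀ᵐ x ∂μ.restrict (A n), u x = cu n)
    (hB : ∀ᵐ x ∂μ.restrict B, u x = 0)
    (hsup : ∃ M : ℝ, ∀ n,
      Φ₂ (cu n / yInv Φ₁ (μ (A n)).toReal) * (μ (A n)).toReal ≤ M) :
    OrliczBounded Φ₁ Φ₂ μ (fun f x => u x * f x) := by
  obtain ⟨hatom, hfin, hdisj, hdisjB, hmB, -, hcover⟩ := hdec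
  obtain ⟨Ψ, hΨ⟩ := hcomp
  obtain ⟨M, hM⟩ := hsup
  obtain ⟨hc₁, hΔ₁'⟩ := hΔ₁
  obtain ⟨hc₂, hΔ₂'⟩ := hΔ₂
  have hapos : ∀ n, 0 < (μ (A n)).toReal :=
    fun n => ENNReal.toReal_pos (hatom n).2.1.ne' (hfin n).ne
  have hdpos : ∀ n, 0 < yInv Φ₁ (μ (A n)).toReal := fun n => Φ₁.yInv_pos (hapos n)
  set M' : ℝ := max M 1 with hM'def
  have hM'pos : 0 < M' := lt_of_lt_of_le one_pos (le_max_right _ _)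
  set K₀ : ℝ := c₂ * Ψ c₁ * M' with hK₀def
  have hK₀pos : 0 < K₀ := mul_pos (mul_pos hc₂ (Ψ.pos hc₁.ne')) hM'pos
  set K : ℝ := max K₀ 1 with hKdef
  have hK1 : 1 ≤ K := le_max_right _ _
  have hKpos : 0 < K := lt_of_lt_of_le one_pos hK1
  -- lintegral decomposition over the atoms and B
  have hdecomp : ∀ h : X → ENNReal, ∫⁻ x, h x ∂μ =
      (∑' n, ∫⁻ x in A n, h x ∂μ) + ∫⁻ x in B, h x ∂μ := by
    intro h
    have h1 : μ = μ.restrict ((⋃ n, A n) ∪ B) := by rw [hcover, Measure.restrict_univ]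
    conv_lhs => rw [h1]
    rw [Measure.restrict_union (Set.disjoint_iUnion_left.mpr (fun n => hdisjB n)) hmB,
      lintegral_add_measure,
      Measure.restrict_iUnion hdisj (fun n => (hatom n).1), lintegral_sum_measure]
  refine ⟨K, hKpos, ?_⟩
  intro f hf
  obtain ⟨hfm, k₀, hk₀pos, hk₀int⟩ := hf
  -- all scalings are integrable thanks to Δ'
  have hint1 : ∀ k : ℝ, 0 < k → Integrable (fun x => Φ₁ (f x / k)) μ := by
    intro k hk
    have hbound : ∀ x, Φ₁ (f x / k) ≤ c₁ * Φ₁ (1/(k*k₀)) * Φ₁ (k₀ * f x) := by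
      intro x
      have h1 : f x / k = (1/(k*k₀)) * (k₀ * f x) := by field_simp
      calc Φ₁ (f x / k) = Φ₁ ((1/(k*k₀)) * (k₀ * f x)) := by rw [h1]
      _ = Φ₁ (|1/(k*k₀)| * |k₀ * f x|) := by rw [← abs_mul, Φ₁.abs_eq]
      _ ≤ c₁ * Φ₁ |1/(k*k₀)| * Φ₁ |k₀ * f x| := hΔ₁' _ _ (abs_nonneg _) (abs_nonneg _)
      _ = c₁ * Φ₁ (1/(k*k₀)) * Φ₁ (k₀ * f x) := by rw [Φ₁.abs_eq, Φ₁.abs_eq]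
    have hintb : Integrable (fun x => c₁ * Φ₁ (1/(k*k₀)) * Φ₁ (k₀ * f x)) μ :=
      hk₀int.const_mul _
    have haesm : AEStronglyMeasurable (fun x => f x / k) μ := by
      simpa [div_eq_mul_inv] using hfm.mul_const k⁻¹
    refine hintb.mono' (Φ₁.continuous'.comp_aestronglyMeasurable haesm) ?_
    refine Eventually.of_forall fun x => ?_
    rw [Real.norm_eq_abs, abs_of_nonneg (Φ₁.nonneg _)]
    exact hbound x
  -- the Luxemburg set of f is nonempty
  have hS1ne : ∃ k : ℝ, 0 < k ∧ ∫ x, Φ₁ (f x / k) ∂μ ≤ 1 := by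
    set I : ℝ := ∫ x, Φ₁ (f x / 1) ∂μ with hIdef
    have hInn : 0 ≤ I := integral_nonneg fun x => Φ₁.nonneg _
    refine ⟨I + 1, by linarith, ?_⟩
    have hpt : ∀ x, Φ₁ (f x / (I+1)) ≤ (1/(I+1)) * Φ₁ (f x / 1) := by
      intro x
      have h1 : f x / (I+1) = (1/(I+1)) * (f x / 1) := by field_simp
      rw [h1]
      exact Φ₁.scale (by positivity) (by rw [div_le_one (by linarith)]; linarith)
    calc ∫ x, Φ₁ (f x / (I+1)) ∂μ ≤ ∫ x, (1/(I+1)) * Φ₁ (f x / 1) ∂μ :=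
      integral_mono (hint1 _ (by linarith)) ((hint1 1 one_pos).const_mul _) hpt
    _ = (1/(I+1)) * I := by rw [integral_const_mul]
    _ ≤ 1 := by rw [div_mul_eq_mul_div, div_le_one (by linarith)]; linarith
  -- measurable representative and a.e. constants on atoms
  obtain ⟨g, hgm, hfg⟩ := hfm
  have hconst : ∀ n, ∃ c : ℝ, ∀ᵐ x ∂μ.restrict (A n), g x = c :=
    fun n => exists_ae_const_on_atom (hatom n) (hfin n) hgm.measurable
  choose fn hfn using hconst
  have hffn : ∀ n, ∀ᵐ x ∂μ.restrict (A n), f x = fn n := by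
    intro n
    filter_upwards [hfn n, ae_restrict_of_ae hfg] with x h1 h2
    rw [h2, h1]
  have hufAe : ∀ n, ∀ᵐ x ∂μ.restrict (A n), u x * f x = cu n * fn n := by
    intro n
    filter_upwards [hcu n, hffn n] with x h1 h2
    rw [h1, h2]
  -- atomwise lintegrals
  have hΦ1n : ∀ k : ℝ, ∀ n, ∫⁻ x in A n, ENNReal.ofReal (Φ₁ (f x / k)) ∂μ
      = ENNReal.ofReal (Φ₁ (fn n / k)) * μ (A n) := by
    intro k n
    have he : ∀ᵐ x ∂μ.restrict (A n),
        ENNReal.ofReal (Φ₁ (f x / k)) = ENNReal.ofReal (Φ₁ (fn n / k)) := by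
      filter_upwards [hffn n] with x h1
      rw [h1]
    rw [lintegral_congr_ae he, setLIntegral_const]
  have hΦ2n : ∀ k' : ℝ, ∀ n, ∫⁻ x in A n, ENNReal.ofReal (Φ₂ (u x * f x / k')) ∂μ
      = ENNReal.ofReal (Φ₂ (cu n * fn n / k')) * μ (A n) := by
    intro k' n
    have he : ∀ᵐ x ∂μ.restrict (A n),
        ENNReal.ofReal (Φ₂ (u x * f x / k')) = ENNReal.ofReal (Φ₂ (cu n * fn n / k')) := by
      filter_upwards [hufAe n] with x h1
      rw [h1]
    rw [lintegral_congr_ae he, setLIntegral_const]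
  have hΦ2B : ∀ k' : ℝ, ∫⁻ x in B, ENNReal.ofReal (Φ₂ (u x * f x / k')) ∂μ = 0 := by
    intro k'
    have he : ∀ᵐ x ∂μ.restrict B, ENNReal.ofReal (Φ₂ (u x * f x / k'))
        = ENNReal.ofReal (Φ₂ (0 / k')) := by
      filter_upwards [hB] with x hx
      rw [hx, zero_mul]
    rw [lintegral_congr_ae he, zero_div, Φ₂.zero, ENNReal.ofReal_zero, lintegral_zero]
  -- THE MAIN CLAIM
  have hclaim : ∀ k : ℝ, 0 < k → (∫ x, Φ₁ (f x / k) ∂μ ≤ 1) →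
      Integrable (fun x => Φ₂ (u x * f x / (K*k))) μ ∧
      ∫ x, Φ₂ (u x * f x / (K*k)) ∂μ ≤ 1 := by
    intro k hk hk1
    have hki : Integrable (fun x => Φ₁ (f x / k)) μ := hint1 k hk
    have hl1 : ∫⁻ x, ENNReal.ofReal (Φ₁ (f x / k)) ∂μ ≤ 1 := by
      rw [← ofReal_integral_eq_lintegral_ofReal hki
        (Eventually.of_forall fun x => Φ₁.nonneg _)]
      calc ENNReal.ofReal (∫ x, Φ₁ (f x / k) ∂μ) ≤ ENNReal.ofReal 1 :=
        ENNReal.ofReal_le_ofReal hk1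
      _ = 1 := ENNReal.ofReal_one
    have htn : ∀ n, Φ₁ (fn n / k) * (μ (A n)).toReal ≤ 1 := by
      intro n
      have h1 : ENNReal.ofReal (Φ₁ (fn n / k)) * μ (A n) ≤ 1 := by
        rw [← hΦ1n k n]
        exact le_trans (lintegral_mono' Measure.restrict_le_self (le_refl _)) hl1
      have h2 : ENNReal.ofReal (Φ₁ (fn n / k)) * μ (A n)
          = ENNReal.ofReal (Φ₁ (fn n / k) * (μ (A n)).toReal) := by
        rw [ENNReal.ofReal_mul (Φ₁.nonneg _), ENNReal.ofReal_toReal (hfin n).ne]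
      rw [h2] at h1
      exact ENNReal.ofReal_le_one.mp h1
    -- the key pointwise estimate on each atom
    have hkey : ∀ n, Φ₂ (cu n * fn n / k) * (μ (A n)).toReal
        ≤ K₀ * (Φ₁ (fn n / k) * (μ (A n)).toReal) := by
      intro n
      set a : ℝ := (μ (A n)).toReal with hadef
      set d : ℝ := yInv Φ₁ a with hddef
      have ha : 0 < a := hapos n
      have hd : 0 < d := hdpos n
      set s : ℝ := Φ₁ (fn n / k) with hsdef
      have hs : 0 ≤ s := Φ₁.nonneg _
      have hsa : s * a ≤ 1 := htn n
      have hA2 : Φ₂ (cu n / d) * a ≤ M' := le_trans (hM n) (le_max_left _ _)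
      have hA1 : Φ₂ (cu n * fn n / k) ≤ c₂ * Φ₂ (cu n / d) * ((s * a) * Ψ c₁) := by
        have e1 : cu n * fn n / k = (cu n / d) * (d * (fn n / k)) := by
          field_simp
        have e2 : Φ₂ (cu n * fn n / k) ≤ c₂ * Φ₂ (cu n / d) * Φ₂ (d * (fn n / k)) := by
          calc Φ₂ (cu n * fn n / k) = Φ₂ ((cu n / d) * (d * (fn n / k))) := by rw [e1]
          _ = Φ₂ (|cu n / d| * |d * (fn n / k)|) := by rw [← abs_mul, Φ₂.abs_eq]
          _ ≤ c₂ * Φ₂ |cu n / d| * Φ₂ |d * (fn n / k)| :=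
            hΔ₂' _ _ (abs_nonneg _) (abs_nonneg _)
          _ = c₂ * Φ₂ (cu n / d) * Φ₂ (d * (fn n / k)) := by rw [Φ₂.abs_eq, Φ₂.abs_eq]
        have e3 : Φ₂ (d * (fn n / k)) ≤ (s * a) * Ψ c₁ := by
          set t : ℝ := |d * (fn n / k)| with htdef
          have ht : 0 ≤ t := abs_nonneg _
          have e4 : Φ₂ (d * (fn n / k)) = Φ₂ t := (Φ₂.abs_eq _).symm
          have e5 : Φ₂ t ≤ Ψ (Φ₁ t) := by
            rw [hΨ (Φ₁ t) (Φ₁.nonneg t)]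
            exact Φ₂.mono ht (Φ₁.le_yInv ht (le_refl _))
          have e6 : Φ₁ t ≤ c₁ * a * s := by
            have e7 : t = |d| * |fn n / k| := by rw [htdef, abs_mul]
            calc Φ₁ t = Φ₁ (|d| * |fn n / k|) := by rw [e7]
            _ ≤ c₁ * Φ₁ |d| * Φ₁ |fn n / k| := hΔ₁' _ _ (abs_nonneg _) (abs_nonneg _)
            _ = c₁ * Φ₁ d * s := by rw [Φ₁.abs_eq, Φ₁.abs_eq]
            _ ≤ c₁ * a * s := by
                apply mul_le_mul_of_nonneg_right _ hs
                apply mul_le_mul_of_nonneg_left _ hc₁.le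
                exact Φ₁.apply_yInv_le ha.le
          have e8 : Ψ (Φ₁ t) ≤ Ψ (c₁ * a * s) := Ψ.mono (Φ₁.nonneg t) e6
          have e9 : Ψ (c₁ * a * s) ≤ (s * a) * Ψ c₁ := by
            have e10 : c₁ * a * s = (s * a) * c₁ := by ring
            rw [e10]
            exact Ψ.scale (mul_nonneg hs ha.le) hsa
          rw [e4]
          exact le_trans e5 (le_trans e8 e9)
        calc Φ₂ (cu n * fn n / k) ≤ c₂ * Φ₂ (cu n / d) * Φ₂ (d * (fn n / k)) := e2
        _ ≤ c₂ * Φ₂ (cu n / d) * ((s * a) * Ψ c₁) := by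
            apply mul_le_mul_of_nonneg_left e3
            exact mul_nonneg hc₂.le (Φ₂.nonneg _)
      calc Φ₂ (cu n * fn n / k) * a ≤ (c₂ * Φ₂ (cu n / d) * ((s * a) * Ψ c₁)) * a :=
        mul_le_mul_of_nonneg_right hA1 ha.le
      _ = (c₂ * Ψ c₁ * (s * a)) * (Φ₂ (cu n / d) * a) := by ring
      _ ≤ (c₂ * Ψ c₁ * (s * a)) * M' := by
          apply mul_le_mul_of_nonneg_left hA2
          exact mul_nonneg (mul_nonneg hc₂.le (Ψ.nonneg _)) (mul_nonneg hs ha.le)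
      _ = K₀ * (s * a) := by rw [hK₀def]; ring
    -- sum up
    have hsum1 : (∑' n, ∫⁻ x in A n, ENNReal.ofReal (Φ₁ (f x / k)) ∂μ) ≤ 1 := by
      refine le_trans ?_ hl1
      rw [hdecomp (fun x => ENNReal.ofReal (Φ₁ (f x / k)))]
      exact le_self_add
    have hmain : ∫⁻ x, ENNReal.ofReal (Φ₂ (u x * f x / k)) ∂μ ≤ ENNReal.ofReal K₀ := by
      rw [hdecomp (fun x => ENNReal.ofReal (Φ₂ (u x * f x / k))), hΦ2B k, add_zero]
      have hterm : ∀ n, ∫⁻ x in A n, ENNReal.ofReal (Φ₂ (u x * f x / k)) ∂μ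
          ≤ ENNReal.ofReal K₀ * ∫⁻ x in A n, ENNReal.ofReal (Φ₁ (f x / k)) ∂μ := by
        intro n
        rw [hΦ2n k n, hΦ1n k n]
        calc ENNReal.ofReal (Φ₂ (cu n * fn n / k)) * μ (A n)
            = ENNReal.ofReal (Φ₂ (cu n * fn n / k) * (μ (A n)).toReal) := by
              rw [ENNReal.ofReal_mul (Φ₂.nonneg _), ENNReal.ofReal_toReal (hfin n).ne]
        _ ≤ ENNReal.ofReal (K₀ * (Φ₁ (fn n / k) * (μ (A n)).toReal)) :=
            ENNReal.ofReal_le_ofReal (hkey n)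
        _ = ENNReal.ofReal K₀ * (ENNReal.ofReal (Φ₁ (fn n / k)) * μ (A n)) := by
            rw [ENNReal.ofReal_mul hK₀pos.le, ENNReal.ofReal_mul (Φ₁.nonneg _),
              ENNReal.ofReal_toReal (hfin n).ne]
      calc (∑' n, ∫⁻ x in A n, ENNReal.ofReal (Φ₂ (u x * f x / k)) ∂μ)
          ≤ ∑' n, ENNReal.ofReal K₀ * ∫⁻ x in A n, ENNReal.ofReal (Φ₁ (f x / k)) ∂μ :=
            ENNReal.tsum_le_tsum hterm
      _ = ENNReal.ofReal K₀ * ∑' n, ∫⁻ x in A n, ENNReal.ofReal (Φ₁ (f x / k)) ∂μ :=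
            ENNReal.tsum_mul_left
      _ ≤ ENNReal.ofReal K₀ * 1 := mul_le_mul_right hsum1 _
      _ = ENNReal.ofReal K₀ := mul_one _
    -- divide by K
    have hpt : ∀ x, Φ₂ (u x * f x / (K*k)) ≤ (1/K) * Φ₂ (u x * f x / k) := by
      intro x
      have h1 : u x * f x / (K*k) = (1/K) * (u x * f x / k) := by field_simp
      rw [h1]
      exact Φ₂.scale (by positivity) (by rw [div_le_one hKpos]; exact hK1)
    have hfinal : ∫⁻ x, ENNReal.ofReal (Φ₂ (u x * f x / (K*k))) ∂μ ≤ 1 := by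
      calc ∫⁻ x, ENNReal.ofReal (Φ₂ (u x * f x / (K*k))) ∂μ
          ≤ ∫⁻ x, ENNReal.ofReal ((1/K) * Φ₂ (u x * f x / k)) ∂μ :=
            lintegral_mono fun x => ENNReal.ofReal_le_ofReal (hpt x)
      _ = ∫⁻ x, ENNReal.ofReal (1/K) * ENNReal.ofReal (Φ₂ (u x * f x / k)) ∂μ := by
            congr 1
            funext x
            rw [ENNReal.ofReal_mul (by positivity)]
      _ = ENNReal.ofReal (1/K) * ∫⁻ x, ENNReal.ofReal (Φ₂ (u x * f x / k)) ∂μ :=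
            lintegral_const_mul' _ _ ENNReal.ofReal_ne_top
      _ ≤ ENNReal.ofReal (1/K) * ENNReal.ofReal K₀ := mul_le_mul_right hmain _
      _ = ENNReal.ofReal ((1/K) * K₀) := (ENNReal.ofReal_mul (by positivity)).symm
      _ ≤ 1 := by
            rw [← ENNReal.ofReal_one]
            apply ENNReal.ofReal_le_ofReal
            rw [one_div, inv_mul_le_iff₀ hKpos, mul_one]
            exact le_max_left _ _
    have hmeas2 : AEStronglyMeasurable (fun x => Φ₂ (u x * f x / (K*k))) μ := by
      apply Φ₂.continuous'.comp_aestronglyMeasurable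
      simpa [div_eq_mul_inv] using
        (hu.aestronglyMeasurable.mul ⟨g, hgm, hfg⟩).mul_const (k⁻¹ * K⁻¹)
    have hint2 : Integrable (fun x => Φ₂ (u x * f x / (K*k))) μ := by
      refine ⟨hmeas2, ?_⟩
      rw [hasFiniteIntegral_iff_ofReal (Eventually.of_forall fun x => Φ₂.nonneg _)]
      exact lt_of_le_of_lt hfinal ENNReal.one_lt_top
    refine ⟨hint2, ?_⟩
    have he := ofReal_integral_eq_lintegral_ofReal hint2
      (Eventually.of_forall fun x => Φ₂.nonneg _)
    rw [← ENNReal.ofReal_one, ← he] at hfinal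
    exact (ENNReal.ofReal_le_ofReal_iff one_pos.le).mp hfinal
  -- conclusion
  constructor
  · constructor
    · exact hu.aestronglyMeasurable.mul ⟨g, hgm, hfg⟩
    · obtain ⟨k, hk, hk1⟩ := hS1ne
      refine ⟨1/(K*k), by positivity, ?_⟩
      have h1 : (fun x => Φ₂ (1/(K*k) * (u x * f x)))
          = fun x => Φ₂ (u x * f x / (K*k)) := by
        funext x
        rw [one_div, inv_mul_eq_div]
      rw [h1]
      exact (hclaim k hk hk1).1
  · show luxNorm Φ₂ μ _ ≤ K * luxNorm Φ₁ μ f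
    rw [luxNorm, luxNorm]
    set S₂ : Set ℝ := {k : ℝ | 0 < k ∧ ∫ x, Φ₂ (u x * f x / k) ∂μ ≤ 1} with hS₂def
    set S₁ : Set ℝ := {k : ℝ | 0 < k ∧ ∫ x, Φ₁ (f x / k) ∂μ ≤ 1} with hS₁def
    have hbdd₂ : BddBelow S₂ := ⟨0, fun x hx => hx.1.le⟩
    have hstep : ∀ k ∈ S₁, sInf S₂ ≤ K * k := by
      intro k hk
      apply csInf_le hbdd₂
      exact ⟨mul_pos hKpos hk.1, (hclaim k hk.1 hk.2).2⟩
    obtain ⟨kw, hkw⟩ := hS1ne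
    have hdiv : sInf S₂ / K ≤ sInf S₁ := by
      refine le_csInf ⟨kw, hkw⟩ ?_
      intro b hb
      rw [div_le_iff₀ hKpos]
      calc sInf S₂ ≤ K * b := hstep b hb
      _ = b * K := mul_comm _ _
    calc sInf S₂ = (sInf S₂ / K) * K := by field_simp
    _ ≤ sInf S₁ * K := mul_le_mul_of_nonneg_right hdiv hKpos.le
    _ = K * sInf S₁ := mul_comm _ _
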